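/- Let P be a symmetric positive semidefinite n×n real matrix, B an n×m real matrix, and let ε > 0, ρ > 0, τ ≥ 0 be scalars such that the block-diagonal matrix diag(P − τ·P B Bᵀ P, −ε + τρ) is positive semidefinite (equivalently, P − τ P B Bᵀ P ⪰ 0 and τρ ≥ ε). Then for every ξ ∈ ℝⁿ, ξᵀPξ ≤ ε implies ‖BᵀPξ‖₂² ≤ ρ. -/

import Mathlib

open Matrix

noncomputable section

theorem key_quad (n m : ℕ)
    (P : Matrix (Fin n) (Fin n) ℝ) (hPsym : P.IsSymm)
    (B : Matrix (Fin n) (Fin m) ℝ) (τ : ℝ)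
    (ξ : Fin n → ℝ) :
    ξ ⬝ᵥ ((P - τ • (P * B * Bᵀ * P)) *ᵥ ξ) = ξ ⬝ᵥ (P *ᵥ ξ) - τ * ((Bᵀ *ᵥ (P *ᵥ ξ)) ⬝ᵥ (Bᵀ *ᵥ (P *ᵥ ξ))) := by
  rw [sub_mulVec, dotProduct_sub, smul_mulVec, dotProduct_smul]
  congr 1
  rw [show P * B * Bᵀ * P = P * (B * (Bᵀ * P)) by rw [Matrix.mul_assoc, Matrix.mul_assoc]]
  rw [← mulVec_mulVec, ← mulVec_mulVec, dotProduct_mulVec, ← mulVec_transpose, hPsym.eq]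
  rw [dotProduct_mulVec, ← mulVec_transpose, mulVec_mulVec, smul_eq_mul]

theorem stmt1 (n m : ℕ)
    (P : Matrix (Fin n) (Fin n) ℝ) (hPsym : P.IsSymm) (hP : P.PosSemidef)
    (B : Matrix (Fin n) (Fin m) ℝ)
    (ε ρ τ : ℝ) (hε : 0 < ε) (hρ : 0 < ρ) (hτ : 0 ≤ τ)
    (hblock : (Matrix.fromBlocks (P - τ • (P * B * Bᵀ * P)) 0 0
        (Matrix.of fun (_ _ : Fin 1) => -ε + τ * ρ)).PosSemidef) :
    ∀ ξ : Fin n → ℝ, ξ ⬝ᵥ (P *ᵥ ξ) ≤ ε →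
      (Bᵀ *ᵥ (P *ᵥ ξ)) ⬝ᵥ (Bᵀ *ᵥ (P *ᵥ ξ)) ≤ ρ := by
  intro ξ hξ
  have h2 := hblock.dotProduct_mulVec_nonneg (Sum.elim (0 : Fin n → ℝ) (fun _ => 1))
  simp [Matrix.fromBlocks_mulVec, dotProduct, Fin.sum_univ_succ, mulVec] at h2
  have hcorner : ε ≤ τ * ρ := by linarith
  have hτpos : 0 < τ := by nlinarith
  have h1 := hblock.dotProduct_mulVec_nonneg (Sum.elim ξ (0 : Fin 1 → ℝ))
  rw [Matrix.fromBlocks_mulVec] at h1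
  simp at h1
  rw [key_quad n m P hPsym B τ ξ] at h1
  nlinarith [(by simpa using hP.dotProduct_mulVec_nonneg ξ : 0 ≤ ξ ⬝ᵥ (P *ᵥ ξ))]
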